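/- Let B ∈ ℝ^{m×d}, let ε₀ ∈ (0, 1/2], and suppose that (1 − ε₀)·‖x‖₂ ≤ ‖Bx‖₂ ≤ (1 + ε₀)·‖x‖₂ for every x ∈ ℝ^d. Let b ∈ ℝ^m and let x* ∈ ℝ^d satisfy Bᵀ(Bx* − b) = 0. Define the gradient-descent iterates by x₁ = 0 and x_{t+1} = x_t − Bᵀ(Bx_t − b). Then for every integer T ≥ 1, ‖Bx_T − b‖₂² ≤ ‖Bx* − b‖₂² + (8ε₀)^{2(T−1)}·‖b‖₂². -/

import Mathlib

open Matrix Finset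

/-- Euclidean norm of a vector in `Fin k → ℝ`. -/
noncomputable def euclNorm {k : ℕ} (v : Fin k → ℝ) : ℝ :=
  Real.sqrt (∑ i, v i ^ 2)

lemma euclNorm_nonneg {k : ℕ} (v : Fin k → ℝ) : 0 ≤ euclNorm v := Real.sqrt_nonneg _

lemma euclNorm_sq {k : ℕ} (v : Fin k → ℝ) : euclNorm v ^ 2 = v ⬝ᵥ v := by
  rw [euclNorm, Real.sq_sqrt (Finset.sum_nonneg fun i _ => sq_nonneg _)]
  simp [dotProduct, sq]

lemma euclNorm_eq_zero {k : ℕ} {v : Fin k → ℝ} (h : euclNorm v = 0) : v = 0 := by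
  have h2 : (∑ i, v i ^ 2) = 0 := by
    have := congrArg (· ^ 2) h
    simpa [euclNorm, Real.sq_sqrt (Finset.sum_nonneg fun i _ => sq_nonneg (v i))] using this
  funext i
  have := (Finset.sum_eq_zero_iff_of_nonneg (fun i _ => sq_nonneg (v i))).1 h2 i (by simp)
  exact pow_eq_zero_iff (n := 2) (by norm_num) |>.1 this

lemma euclNorm_neg {k : ℕ} (v : Fin k → ℝ) : euclNorm (-v) = euclNorm v := by
  simp [euclNorm]

lemma dot_le_norm {k : ℕ} (u v : Fin k → ℝ) : u ⬝ᵥ v ≤ euclNorm u * euclNorm v := by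
  have h := sum_mul_sq_le_sq_mul_sq Finset.univ u v
  have h1 : u ⬝ᵥ v ≤ |u ⬝ᵥ v| := le_abs_self _
  have h2 : |u ⬝ᵥ v| = Real.sqrt ((u ⬝ᵥ v) ^ 2) := (Real.sqrt_sq_eq_abs _).symm
  calc u ⬝ᵥ v ≤ Real.sqrt ((u ⬝ᵥ v) ^ 2) := by rw [← h2]; exact h1
    _ ≤ Real.sqrt ((∑ i, u i ^ 2) * ∑ i, v i ^ 2) := Real.sqrt_le_sqrt (by simpa [dotProduct] using h)
    _ = euclNorm u * euclNorm v := by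
        rw [Real.sqrt_mul (Finset.sum_nonneg fun i _ => sq_nonneg _)]; rfl

lemma euclAdj {m d : ℕ} (B : Matrix (Fin m) (Fin d) ℝ) (u : Fin m → ℝ) (y : Fin d → ℝ) :
    (Bᵀ *ᵥ u) ⬝ᵥ y = u ⬝ᵥ (B *ᵥ y) := by
  rw [Matrix.mulVec_transpose, ← Matrix.dotProduct_mulVec]

lemma pythag {k : ℕ} (u v : Fin k → ℝ) (h : u ⬝ᵥ v = 0) :
    euclNorm (u + v) ^ 2 = euclNorm u ^ 2 + euclNorm v ^ 2 := by
  rw [euclNorm_sq, euclNorm_sq, euclNorm_sq, add_dotProduct, dotProduct_add,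
    dotProduct_add, dotProduct_comm v u, h]
  ring

section Key

variable {m d : ℕ} (B : Matrix (Fin m) (Fin d) ℝ) (ε₀ : ℝ)

lemma key (hε₀ : 0 < ε₀) (hε₀' : ε₀ ≤ 1 / 2)
    (hB : ∀ x : Fin d → ℝ,
      (1 - ε₀) * euclNorm x ≤ euclNorm (B *ᵥ x) ∧
      euclNorm (B *ᵥ x) ≤ (1 + ε₀) * euclNorm x)
    (e : Fin d → ℝ) :
    euclNorm (e - Bᵀ *ᵥ (B *ᵥ e)) ≤ (5 / 2 * ε₀) * euclNorm e := by
  set M : ℝ := 5 / 2 * ε₀ with hM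
  have hM0 : 0 ≤ M := by positivity
  obtain ⟨s, hs⟩ : ∃ s : (Fin d → ℝ) → (Fin d → ℝ) → ℝ,
      s = fun u v => u ⬝ᵥ v - (B *ᵥ u) ⬝ᵥ (B *ᵥ v) := ⟨_, rfl⟩
  -- quadratic form bound
  have hq : ∀ z : Fin d → ℝ, |s z z| ≤ M * euclNorm z ^ 2 := by
    intro z
    have h1 := (hB z).1
    have h2 := (hB z).2
    have hz : 0 ≤ euclNorm z := euclNorm_nonneg z
    have hBz : 0 ≤ euclNorm (B *ᵥ z) := euclNorm_nonneg _
    have hsz : s z z = euclNorm z ^ 2 - euclNorm (B *ᵥ z) ^ 2 := by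
      rw [hs, euclNorm_sq, euclNorm_sq]
    rw [hsz, abs_le]
    have h1' : 0 ≤ (1 - ε₀) * euclNorm z := by nlinarith
    have h2sq : euclNorm (B *ᵥ z) ^ 2 ≤ (1 + ε₀) ^ 2 * euclNorm z ^ 2 := by
      nlinarith [mul_le_mul h2 h2 hBz (by nlinarith : (0:ℝ) ≤ (1 + ε₀) * euclNorm z)]
    have h1sq : (1 - ε₀) ^ 2 * euclNorm z ^ 2 ≤ euclNorm (B *ᵥ z) ^ 2 := by
      nlinarith [mul_le_mul h1 h1 h1' hBz]
    have hend : 0 ≤ ε₀ * (1 / 2 - ε₀) * euclNorm z ^ 2 :=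
      mul_nonneg (mul_nonneg hε₀.le (by linarith)) (sq_nonneg _)
    constructor
    · nlinarith [sq_nonneg (euclNorm z)]
    · nlinarith [sq_nonneg (euclNorm z)]
  -- bilinearity expansions
  have hexp : ∀ u v : Fin d → ℝ, s (u + v) (u + v) = s u u + 2 * s u v + s v v := by
    intro u v
    simp only [hs, Matrix.mulVec_add, add_dotProduct, dotProduct_add]
    rw [dotProduct_comm v u, dotProduct_comm (B *ᵥ v) (B *ᵥ u)]
    ring
  have hexp' : ∀ u v : Fin d → ℝ, s (u - v) (u - v) = s u u - 2 * s u v + s v v := by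
    intro u v
    simp only [hs, Matrix.mulVec_sub, sub_dotProduct, dotProduct_sub]
    rw [dotProduct_comm v u, dotProduct_comm (B *ᵥ v) (B *ᵥ u)]
    ring
  -- polarization inequality
  have hpol : ∀ u v : Fin d → ℝ, s u v ≤ M / 2 * (euclNorm u ^ 2 + euclNorm v ^ 2) := by
    intro u v
    have h1 := (abs_le.1 (hq (u + v))).2
    have h2 := (abs_le.1 (hq (u - v))).1
    have hpar : euclNorm (u + v) ^ 2 + euclNorm (u - v) ^ 2
        = 2 * euclNorm u ^ 2 + 2 * euclNorm v ^ 2 := by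
      simp only [euclNorm_sq, add_dotProduct, dotProduct_add,
        sub_dotProduct, dotProduct_sub]
      rw [dotProduct_comm v u]; ring
    have e1 := hexp u v
    have e2 := hexp' u v
    have h3 : M * euclNorm (u + v) ^ 2 + M * euclNorm (u - v) ^ 2
        = 2 * (M * euclNorm u ^ 2) + 2 * (M * euclNorm v ^ 2) := by
      calc M * euclNorm (u + v) ^ 2 + M * euclNorm (u - v) ^ 2
          = M * (euclNorm (u + v) ^ 2 + euclNorm (u - v) ^ 2) := by ring
        _ = M * (2 * euclNorm u ^ 2 + 2 * euclNorm v ^ 2) := by rw [hpar]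
        _ = 2 * (M * euclNorm u ^ 2) + 2 * (M * euclNorm v ^ 2) := by ring
    have h4 : 4 * s u v ≤ M * euclNorm (u + v) ^ 2 + M * euclNorm (u - v) ^ 2 := by
      linarith
    linarith [h4, h3]
  -- A e ⬝ y = s e y
  have hA : ∀ y : Fin d → ℝ, (e - Bᵀ *ᵥ (B *ᵥ e)) ⬝ᵥ y = s e y := by
    intro y
    rw [sub_dotProduct, euclAdj, hs]
  set n : ℝ := euclNorm (e - Bᵀ *ᵥ (B *ᵥ e)) with hn
  set a : ℝ := euclNorm e with ha
  have hn0 : 0 ≤ n := euclNorm_nonneg _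
  have ha0 : 0 ≤ a := euclNorm_nonneg _
  rcases eq_or_lt_of_le hn0 with hn' | hn'
  · rw [← hn']; positivity
  rcases eq_or_lt_of_le ha0 with ha' | ha'
  · exfalso
    have he : e = 0 := euclNorm_eq_zero ha'.symm
    have : n = 0 := by
      rw [hn, he]
      simp [euclNorm]
    linarith
  -- scaling argument with y = (a/n) • (A e)
  set y : Fin d → ℝ := (a / n) • (e - Bᵀ *ᵥ (B *ᵥ e)) with hy
  have hsy : s e y = (a / n) * n ^ 2 := by
    have : s e y = (e - Bᵀ *ᵥ (B *ᵥ e)) ⬝ᵥ y := (hA y).symm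
    rw [this, hy, dotProduct_smul, smul_eq_mul, ← euclNorm_sq]
  have hny : euclNorm y ^ 2 = (a / n) ^ 2 * n ^ 2 := by
    rw [euclNorm_sq, hy, smul_dotProduct, dotProduct_smul, smul_eq_mul,
      smul_eq_mul, ← euclNorm_sq]
    ring
  have := hpol e y
  rw [hsy, hny] at this
  have h2 : a * n ≤ M * a ^ 2 := by
    have hane : (a / n) * n ^ 2 = a * n := by field_simp
    have hane2 : (a / n) ^ 2 * n ^ 2 = a ^ 2 := by field_simp
    rw [hane, hane2] at this
    linarith
  nlinarith

lemma step (hε₀ : 0 < ε₀) (hε₀' : ε₀ ≤ 1 / 2)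
    (hB : ∀ x : Fin d → ℝ,
      (1 - ε₀) * euclNorm x ≤ euclNorm (B *ᵥ x) ∧
      euclNorm (B *ᵥ x) ≤ (1 + ε₀) * euclNorm x)
    (e : Fin d → ℝ) :
    euclNorm (B *ᵥ (e - Bᵀ *ᵥ (B *ᵥ e))) ≤ 8 * ε₀ * euclNorm (B *ᵥ e) := by
  have h1 := (hB (e - Bᵀ *ᵥ (B *ᵥ e))).2
  have h2 := key B ε₀ hε₀ hε₀' hB e
  have h3 := (hB e).1
  have he0 : 0 ≤ euclNorm e := euclNorm_nonneg e
  have hA0 : 0 ≤ euclNorm (e - Bᵀ *ᵥ (B *ᵥ e)) := euclNorm_nonneg _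
  nlinarith [euclNorm_nonneg (B *ᵥ e)]

end Key

theorem stmt_16 (m d : ℕ) (B : Matrix (Fin m) (Fin d) ℝ) (ε₀ : ℝ)
    (hε₀ : 0 < ε₀) (hε₀' : ε₀ ≤ 1 / 2)
    (hB : ∀ x : Fin d → ℝ,
      (1 - ε₀) * euclNorm x ≤ euclNorm (B *ᵥ x) ∧
      euclNorm (B *ᵥ x) ≤ (1 + ε₀) * euclNorm x)
    (b : Fin m → ℝ) (xstar : Fin d → ℝ)
    (hstar : Bᵀ *ᵥ (B *ᵥ xstar - b) = 0)
    (x : ℕ → Fin d → ℝ) (hx1 : x 1 = 0)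
    (hrec : ∀ t : ℕ, 1 ≤ t → x (t + 1) = x t - Bᵀ *ᵥ (B *ᵥ x t - b)) :
    ∀ T : ℕ, 1 ≤ T →
      euclNorm (B *ᵥ x T - b) ^ 2 ≤
        euclNorm (B *ᵥ xstar - b) ^ 2 + (8 * ε₀) ^ (2 * (T - 1)) * euclNorm b ^ 2 := by
  -- orthogonality of residual to range of B
  have horth : ∀ v : Fin d → ℝ, (B *ᵥ xstar - b) ⬝ᵥ (B *ᵥ v) = 0 := by
    intro v
    rw [← euclAdj, hstar, zero_dotProduct]
  -- main claim by induction
  have claim : ∀ T : ℕ, 1 ≤ T →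
      euclNorm (B *ᵥ (x T - xstar)) ≤ (8 * ε₀) ^ (T - 1) * euclNorm b := by
    intro T hT
    induction T, hT using Nat.le_induction with
    | base =>
      rw [hx1]
      have : (0 : Fin d → ℝ) - xstar = -xstar := by simp
      rw [this, Matrix.mulVec_neg, euclNorm_neg]
      simp only [Nat.sub_self, pow_zero, one_mul]
      -- ‖B xstar‖ ≤ ‖b‖
      have ho : (B *ᵥ xstar) ⬝ᵥ (B *ᵥ xstar - b) = 0 := by
        rw [dotProduct_comm, ← euclAdj, hstar, zero_dotProduct]
      have h1 : (B *ᵥ xstar) ⬝ᵥ (B *ᵥ xstar) = (B *ᵥ xstar) ⬝ᵥ b := by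
        rw [dotProduct_sub] at ho; linarith
      have h2 : euclNorm (B *ᵥ xstar) ^ 2 ≤ euclNorm (B *ᵥ xstar) * euclNorm b := by
        rw [euclNorm_sq, h1]; exact dot_le_norm _ _
      nlinarith [euclNorm_nonneg (B *ᵥ xstar), euclNorm_nonneg b]
    | succ t ht ih =>
      have herr : x (t + 1) - xstar = (x t - xstar) - Bᵀ *ᵥ (B *ᵥ (x t - xstar)) := by
        rw [hrec t ht]
        have hd : B *ᵥ x t - b = B *ᵥ (x t - xstar) + (B *ᵥ xstar - b) := by
          rw [Matrix.mulVec_sub]; abel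
        rw [hd, Matrix.mulVec_add, hstar, add_zero]
        abel
      rw [herr]
      have hstep := step B ε₀ hε₀ hε₀' hB (x t - xstar)
      have h8 : (0:ℝ) ≤ 8 * ε₀ := by linarith
      calc euclNorm (B *ᵥ ((x t - xstar) - Bᵀ *ᵥ (B *ᵥ (x t - xstar))))
          ≤ 8 * ε₀ * euclNorm (B *ᵥ (x t - xstar)) := hstep
        _ ≤ 8 * ε₀ * ((8 * ε₀) ^ (t - 1) * euclNorm b) := by
            exact mul_le_mul_of_nonneg_left ih h8
        _ = (8 * ε₀) ^ (t + 1 - 1) * euclNorm b := by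
            rw [Nat.add_sub_cancel]
            conv_rhs => rw [show t = (t - 1) + 1 from (Nat.sub_add_cancel ht).symm]
            rw [pow_succ]
            ring
  intro T hT
  have hdec : B *ᵥ x T - b = (B *ᵥ xstar - b) + B *ᵥ (x T - xstar) := by
    rw [Matrix.mulVec_sub]; abel
  rw [hdec, pythag _ _ (horth (x T - xstar))]
  have hc := claim T hT
  have h1 : euclNorm (B *ᵥ (x T - xstar)) ^ 2 ≤ ((8 * ε₀) ^ (T - 1) * euclNorm b) ^ 2 :=
    pow_le_pow_left₀ (euclNorm_nonneg _) hc 2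
  have h2 : ((8 * ε₀) ^ (T - 1) * euclNorm b) ^ 2
      = (8 * ε₀) ^ (2 * (T - 1)) * euclNorm b ^ 2 := by
    rw [mul_pow, ← pow_mul, mul_comm (T - 1) 2]
  linarith [h1.trans_eq h2]
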